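/- Let n be a nonnegative integer and a, c, d, e, p ∈ ℂ. Assume p − a ≠ 0 and set γ = p(d−a−1)/(p−a). Assume the parameters are nondegenerate for the identity below. Then ₄F₃(a, c, p+1, −n; d, e, p; 1) = ((e−c)_n / (e)_n) · ₄F₃(d−a−1, c, γ+1, −n; d, 1+c−e−n, γ; 1). -/

import Mathlib

/-- Rising factorial (Pochhammer symbol) `(a)ₖ = a(a+1)⋯(a+k−1)`. -/
noncomputable def poch (a : ℂ) (k : ℕ) : ℂ := (ascPochhammer ℂ k).eval a

/-- Terminating hypergeometric sum with numerator parameters `A` together with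
the extra top parameter `-n`, denominator parameters `B`, and argument `x`. -/
noncomputable def hypTerm (A B : List ℂ) (n : ℕ) (x : ℂ) : ℂ :=
  ∑ k ∈ Finset.range (n + 1),
    ((A.map fun a => poch a k).prod * poch (-(n : ℂ)) k) /
      ((k.factorial : ℂ) * (B.map fun b => poch b k).prod) * x ^ k

lemma poch_zero (a : ℂ) : poch a 0 = 1 := by simp [poch]

lemma poch_one (a : ℂ) : poch a 1 = a := by simp [poch]

lemma poch_succ (a : ℂ) (k : ℕ) : poch a (k + 1) = poch a k * (a + k) := by
  simp [poch, ascPochhammer_succ_eval]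

lemma poch_succ_left (a : ℂ) (k : ℕ) : poch a (k + 1) = a * poch (a + 1) k := by
  simp [poch, ascPochhammer_succ_left, Polynomial.eval_comp]

lemma poch_add (a : ℂ) (m j : ℕ) : poch a (m + j) = poch a m * poch (a + m) j := by
  induction j with
  | zero => simp [poch_zero]
  | succ j ih => rw [← Nat.add_assoc, poch_succ, ih, poch_succ]; push_cast; ring

lemma poch_reflect (y : ℂ) (j : ℕ) : poch y j = (-1)^j * poch (1 - y - j) j := by
  induction j generalizing y with
  | zero => simp [poch_zero]
  | succ j ih =>
    rw [poch_succ, poch_succ_left, show (1:ℂ) - y - (j+1:ℕ) + 1 = 1 - y - j by push_cast; ring,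
      ih y]
    push_cast
    ring

lemma poch_nat_neg (M m : ℕ) (h : m ≤ M) :
    poch (-(M:ℂ)) m = (-1)^m * (m.factorial : ℂ) * (M.choose m : ℂ) := by
  induction m with
  | zero => simp [poch_zero]
  | succ m ih =>
    rw [poch_succ, ih (le_of_lt h)]
    have hc : (M.choose (m+1) : ℂ) * (m+1) = (M.choose m : ℂ) * ((M:ℂ) - m) := by
      have := Nat.choose_succ_right_eq M m
      have hMm : ((M - m : ℕ) : ℂ) = (M : ℂ) - m := by
        push_cast [Nat.cast_sub (le_of_lt h)]; ring
      calc (M.choose (m+1) : ℂ) * (m+1) = ((M.choose (m+1) * (m+1) : ℕ) : ℂ) := by push_cast; ring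
        _ = ((M.choose m * (M - m) : ℕ) : ℂ) := by rw [this]
        _ = (M.choose m : ℂ) * ((M:ℂ) - m) := by push_cast [Nat.cast_sub (le_of_lt h)]; ring
    have : ((m+1).factorial : ℂ) = (m.factorial : ℂ) * (m+1) := by
      rw [Nat.factorial_succ]; push_cast; ring
    rw [this]
    linear_combination ((-1:ℂ))^m * (m.factorial:ℂ) * hc

lemma vandermonde : ∀ (k : ℕ) (b d : ℂ),
    (∑ j ∈ Finset.range (k+1),
      (-1:ℂ)^j * (k.choose j : ℂ) * poch b j * poch (d + j) (k - j)) = poch (d - b) k := by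
  intro k
  induction k with
  | zero => intro b d; simp [poch_zero]
  | succ k ih =>
    intro b d
    have e1 : (∑ j ∈ Finset.range (k+1+1),
        (-1:ℂ)^j * ((k+1).choose j : ℂ) * poch b j * poch (d + j) (k + 1 - j))
        = (∑ j ∈ Finset.range (k+1+1),
            (-1:ℂ)^j * (k.choose j : ℂ) * poch b j * poch (d + j) (k + 1 - j))
          + ∑ j ∈ Finset.range (k+1),
              (-1:ℂ)^(j+1) * (k.choose j : ℂ) * poch b (j+1) * poch (d + ((j+1:ℕ):ℂ)) (k - j) := by
      rw [Finset.sum_range_succ'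
          (fun j => (-1:ℂ)^j * ((k+1).choose j : ℂ) * poch b j * poch (d + j) (k + 1 - j)) (k+1),
        Finset.sum_range_succ'
          (fun j => (-1:ℂ)^j * (k.choose j : ℂ) * poch b j * poch (d + j) (k + 1 - j)) (k+1)]
      have step : ∀ j ∈ Finset.range (k+1),
          (-1:ℂ)^(j+1) * ((k+1).choose (j+1) : ℂ) * poch b (j+1) * poch (d + ((j+1:ℕ):ℂ)) (k + 1 - (j+1))
          = (-1:ℂ)^(j+1) * (k.choose (j+1) : ℂ) * poch b (j+1) * poch (d + ((j+1:ℕ):ℂ)) (k + 1 - (j+1))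
            + (-1:ℂ)^(j+1) * (k.choose j : ℂ) * poch b (j+1) * poch (d + ((j+1:ℕ):ℂ)) (k - j) := by
        intro j hj
        have : k + 1 - (j+1) = k - j := by omega
        rw [this, Nat.choose_succ_succ]
        push_cast
        ring
      rw [Finset.sum_congr rfl step, Finset.sum_add_distrib]
      simp
      ring
    rw [e1, Finset.sum_range_succ
        (fun j => (-1:ℂ)^j * (k.choose j : ℂ) * poch b j * poch (d + j) (k + 1 - j)) (k+1)]
    simp only [Nat.choose_succ_self, Nat.cast_zero]
    rw [mul_zero, zero_mul, zero_mul, add_zero, ← Finset.sum_add_distrib]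
    have step2 : ∀ j ∈ Finset.range (k+1),
        ((-1:ℂ)^j * (k.choose j : ℂ) * poch b j * poch (d + j) (k + 1 - j)
          + (-1:ℂ)^(j+1) * (k.choose j : ℂ) * poch b (j+1) * poch (d + ((j+1:ℕ):ℂ)) (k - j))
        = (d - b) * ((-1:ℂ)^j * (k.choose j : ℂ) * poch b j * poch ((d+1) + j) (k - j)) := by
      intro j hj
      have hjk : j ≤ k := Nat.lt_succ_iff.mp (Finset.mem_range.mp hj)
      have h1 : k + 1 - j = (k - j) + 1 := by omega
      rw [h1, poch_succ_left, poch_succ, show (d:ℂ) + ((j+1:ℕ):ℂ) = (d + j) + 1 by push_cast; ring,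
        show (d:ℂ) + 1 + j = d + j + 1 by ring]
      ring
    rw [Finset.sum_congr rfl step2, ← Finset.mul_sum, ih b (d+1),
      show (d:ℂ) + 1 - b = (d - b) + 1 by ring, ← poch_succ_left]

lemma poch_split (x : ℂ) (m M : ℕ) (h : m ≤ M) :
    poch x M = poch x m * poch (x + m) (M - m) := by
  have := poch_add x m (M - m)
  rwa [Nat.add_sub_cancel' h] at this

lemma gauss (M : ℕ) (α β : ℂ) (hβ : poch β M ≠ 0) :
    ∑ m ∈ Finset.range (M+1), poch α m * poch (-(M:ℂ)) m / ((m.factorial:ℂ) * poch β m)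
      = poch (β - α) M / poch β M := by
  have step : ∀ m ∈ Finset.range (M+1),
      poch α m * poch (-(M:ℂ)) m / ((m.factorial:ℂ) * poch β m)
      = (-1:ℂ)^m * (M.choose m : ℂ) * poch α m * poch (β + m) (M - m) / poch β M := by
    intro m hm
    have hmM : m ≤ M := Nat.lt_succ_iff.mp (Finset.mem_range.mp hm)
    have hsp := poch_split β m M hmM
    have hβm : poch β m ≠ 0 := by
      intro h0; apply hβ; rw [hsp, h0, zero_mul]
    have hfac : (m.factorial : ℂ) ≠ 0 := Nat.cast_ne_zero.mpr m.factorial_ne_zero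
    have hc : poch (β + m) (M - m) ≠ 0 := by
      intro h0; apply hβ; rw [hsp, h0, mul_zero]
    rw [poch_nat_neg M m hmM, hsp]
    field_simp
  rw [Finset.sum_congr rfl step, ← Finset.sum_div, vandermonde M α β]

lemma sears (n : ℕ) (a c d e : ℂ)
    (hd : ∀ k ≤ n, poch d k ≠ 0) (he : ∀ k ≤ n, poch e k ≠ 0)
    (hf : ∀ k ≤ n, poch (1 + c - e - (n:ℂ)) k ≠ 0) :
    (∑ k ∈ Finset.range (n+1),
      poch a k * poch c k * poch (-(n:ℂ)) k / ((k.factorial:ℂ) * (poch d k * poch e k)))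
    = poch (e - c) n / poch e n *
      ∑ j ∈ Finset.range (n+1),
        poch (d - a) j * poch c j * poch (-(n:ℂ)) j /
          ((j.factorial:ℂ) * (poch d j * poch (1 + c - e - (n:ℂ)) j)) := by
  set f : ℂ := 1 + c - e - (n:ℂ) with hfdef
  set T : ℕ → ℕ → ℂ := fun j k =>
    (-1:ℂ)^j * (k.choose j : ℂ) * poch (d-a) j * poch (d + j) (k - j) * poch c k *
      poch (-(n:ℂ)) k / ((k.factorial:ℂ) * (poch d k * poch e k)) with hT
  -- Step 1+2: expand poch a k by Vandermonde, inner sum over full range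
  have step1 : (∑ k ∈ Finset.range (n+1),
      poch a k * poch c k * poch (-(n:ℂ)) k / ((k.factorial:ℂ) * (poch d k * poch e k)))
      = ∑ k ∈ Finset.range (n+1), ∑ j ∈ Finset.range (n+1), T j k := by
    refine Finset.sum_congr rfl (fun k hk => ?_)
    have hk' : k ≤ n := Nat.lt_succ_iff.mp (Finset.mem_range.mp hk)
    have hv : poch a k = ∑ j ∈ Finset.range (k+1),
        (-1:ℂ)^j * (k.choose j : ℂ) * poch (d-a) j * poch (d + j) (k - j) := by
      rw [vandermonde k (d-a) d, show d - (d-a) = a by ring]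
    rw [hv, Finset.sum_mul, Finset.sum_mul, Finset.sum_div]
    rw [Finset.sum_subset (Finset.range_subset_range.mpr (by omega : k+1 ≤ n+1))]
    intro j hj hj'
    have : k < j := by
      simp only [Finset.mem_range] at hj hj' ⊢; omega
    simp only [hT, Nat.choose_eq_zero_of_lt this, Nat.cast_zero]
    ring
  rw [step1, Finset.sum_comm]
  -- Step 4+5+6: evaluate inner sum for fixed j
  have step4 : ∀ j ∈ Finset.range (n+1),
      (∑ k ∈ Finset.range (n+1), T j k)
      = (-1:ℂ)^j * poch (d-a) j * poch c j * poch (-(n:ℂ)) j /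
          ((j.factorial:ℂ) * (poch d j * poch e j)) *
        (poch (e - c) (n - j) / poch (e + j) (n - j)) := by
    intro j hj
    have hjn : j ≤ n := Nat.lt_succ_iff.mp (Finset.mem_range.mp hj)
    have hesp := poch_split e j n hjn
    have hej : poch (e + j) (n - j) ≠ 0 := by
      intro h0; exact he n le_rfl (by rw [hesp, h0, mul_zero])
    -- drop k < j terms, reindex k = j + m
    have hIco : (∑ k ∈ Finset.range (n+1), T j k) = ∑ k ∈ Finset.Ico j (n+1), T j k := by
      rw [Finset.range_eq_Ico]
      refine (Finset.sum_subset (Finset.Ico_subset_Ico (Nat.zero_le j) le_rfl) ?_).symm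
      intro k hk hk'
      have : k < j := by
        simp only [Finset.mem_Ico] at hk hk' ⊢; omega
      simp only [hT, Nat.choose_eq_zero_of_lt this, Nat.cast_zero]
      ring
    rw [hIco, Finset.sum_Ico_eq_sum_range]
    have hrange : n + 1 - j = (n - j) + 1 := by omega
    rw [hrange]
    have termwise : ∀ m ∈ Finset.range ((n-j)+1),
        T j (j + m)
        = (-1:ℂ)^j * poch (d-a) j * poch c j * poch (-(n:ℂ)) j /
            ((j.factorial:ℂ) * (poch d j * poch e j)) *
          (poch (c + j) m * poch (-(((n-j:ℕ)):ℂ)) m / ((m.factorial:ℂ) * poch (e + j) m)) := by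
      intro m hm
      have hmnj : m ≤ n - j := Nat.lt_succ_iff.mp (Finset.mem_range.mp hm)
      have hjmn : j + m ≤ n := by omega
      have hch : ((j+m).factorial : ℂ) = ((j+m).choose j : ℂ) * (j.factorial:ℂ) * (m.factorial:ℂ) := by
        have := Nat.choose_mul_factorial_mul_factorial (Nat.le_add_right j m)
        rw [Nat.add_sub_cancel_left] at this
        calc ((j+m).factorial : ℂ) = (((j+m).choose j * j.factorial * m.factorial : ℕ) : ℂ) := by
              rw [this]
          _ = ((j+m).choose j : ℂ) * (j.factorial:ℂ) * (m.factorial:ℂ) := by push_cast; ring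
      have hdsp := poch_add d j m
      have hcsp := poch_add c j m
      have hesp2 := poch_add e j m
      have hnsp : poch (-(n:ℂ)) (j + m) = poch (-(n:ℂ)) j * poch (-(((n-j:ℕ)):ℂ)) m := by
        rw [poch_add]
        congr 2
        push_cast [Nat.cast_sub hjn]
        ring
      have hdj : poch d (j+m) ≠ 0 := hd _ hjmn
      have hdj1 : poch d j ≠ 0 := hd _ hjn
      have hdjm : poch (d + j) m ≠ 0 := by
        intro h0; exact hdj (by rw [hdsp, h0, mul_zero])
      have hej1 : poch e j ≠ 0 := he _ hjn
      have hejm : poch (e + j) m ≠ 0 := by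
        intro h0
        exact he _ hjmn (by rw [hesp2, h0, mul_zero])
      have hchne : ((j+m).choose j : ℂ) ≠ 0 :=
        Nat.cast_ne_zero.mpr (Nat.choose_pos (Nat.le_add_right j m)).ne'
      have hjf : (j.factorial : ℂ) ≠ 0 := Nat.cast_ne_zero.mpr j.factorial_ne_zero
      have hmf : (m.factorial : ℂ) ≠ 0 := Nat.cast_ne_zero.mpr m.factorial_ne_zero
      simp only [hT]
      rw [Nat.add_sub_cancel_left, hch, hdsp, hcsp, hesp2, hnsp]
      field_simp
    rw [Finset.sum_congr rfl termwise, ← Finset.mul_sum,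
      gauss (n-j) (c+j) (e+j) hej, show e + (j:ℂ) - (c + j) = e - c by ring]
  rw [Finset.sum_congr rfl step4]
  -- Step 7: final per-term rewrite and factor out the prefactor
  have step7 : ∀ j ∈ Finset.range (n+1),
      ((-1:ℂ)^j * poch (d-a) j * poch c j * poch (-(n:ℂ)) j /
          ((j.factorial:ℂ) * (poch d j * poch e j)) *
        (poch (e - c) (n - j) / poch (e + j) (n - j)))
      = poch (e - c) n / poch e n *
          (poch (d - a) j * poch c j * poch (-(n:ℂ)) j /
            ((j.factorial:ℂ) * (poch d j * poch f j))) := by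
    intro j hj
    have hjn : j ≤ n := Nat.lt_succ_iff.mp (Finset.mem_range.mp hj)
    have hesp := poch_split e j n hjn
    have hej : poch (e + j) (n - j) ≠ 0 := by
      intro h0; exact he n le_rfl (by rw [hesp, h0, mul_zero])
    have hej1 : poch e j ≠ 0 := he _ hjn
    have hecsp : poch (e - c) n = poch (e - c) (n - j) * ((-1:ℂ)^j * poch f j) := by
      have h1 := poch_split (e - c) (n - j) n (Nat.sub_le n j)
      rw [Nat.sub_sub_self hjn] at h1
      rw [h1]
      congr 1
      rw [poch_reflect (e - c + ((n-j:ℕ):ℂ)) j]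
      congr 2
      push_cast [Nat.cast_sub hjn]
      ring
    have hfj : poch f j ≠ 0 := hf _ hjn
    have hjf : (j.factorial : ℂ) ≠ 0 := Nat.cast_ne_zero.mpr j.factorial_ne_zero
    have hdj1 : poch d j ≠ 0 := hd _ hjn
    rw [hecsp, hesp]
    field_simp
  rw [Finset.sum_congr rfl step7, ← Finset.mul_sum]

lemma contig (n : ℕ) (x c d e q : ℂ) (hq : q ≠ 0)
    (hqk : ∀ k ≤ n, poch q k ≠ 0) :
    hypTerm [x, c, q + 1] [d, e, q] n 1
      = (q - x)/q * (∑ k ∈ Finset.range (n+1),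
          poch x k * poch c k * poch (-(n:ℂ)) k / ((k.factorial:ℂ) * (poch d k * poch e k)))
        + x/q * (∑ k ∈ Finset.range (n+1),
          poch (x+1) k * poch c k * poch (-(n:ℂ)) k / ((k.factorial:ℂ) * (poch d k * poch e k))) := by
  unfold hypTerm
  rw [Finset.mul_sum, Finset.mul_sum, ← Finset.sum_add_distrib]
  refine Finset.sum_congr rfl fun k hk => ?_
  simp only [List.map_cons, List.map_nil, List.prod_cons, List.prod_nil, mul_one, one_pow]
  have hqk' := hqk k (Nat.lt_succ_iff.mp (Finset.mem_range.mp hk))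
  have hP : q * poch (q+1) k = poch q k * (q + k) := by
    rw [← poch_succ_left, poch_succ]
  have hA : x * poch (x+1) k = poch x k * (x + k) := by
    rw [← poch_succ_left, poch_succ]
  rcases eq_or_ne ((k.factorial:ℂ) * (poch d k * poch e k)) 0 with h0 | h0
  · rw [show (k.factorial:ℂ) * (poch d k * (poch e k * poch q k)) =
      ((k.factorial:ℂ) * (poch d k * poch e k)) * poch q k by ring, h0, zero_mul]
    simp
  · have h1 : (k.factorial:ℂ) ≠ 0 := left_ne_zero_of_mul h0
    have h2 : poch d k ≠ 0 := left_ne_zero_of_mul (right_ne_zero_of_mul h0)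
    have h3 : poch e k ≠ 0 := right_ne_zero_of_mul (right_ne_zero_of_mul h0)
    have hD : (k.factorial:ℂ) * (poch d k * (poch e k * poch q k)) ≠ 0 :=
      mul_ne_zero h1 (mul_ne_zero h2 (mul_ne_zero h3 hqk'))
    rw [div_eq_iff hD]
    field_simp
    linear_combination (-(poch c k * poch (-(n:ℂ)) k * poch q k)) * hA + (poch x k * poch c k * poch (-(n:ℂ)) k) * hP

theorem corollary_2C12P2 (n : ℕ) (a c d e p : ℂ)
    (hpa : p - a ≠ 0) (γ : ℂ)
    (hγ : γ = p * (d - a - 1) / (p - a))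
    (hnd : ∀ z ∈ [d, e, p, 1 + c - e - (n : ℂ), γ], ∀ k ≤ n, poch z k ≠ 0) :
    hypTerm [a, c, p + 1] [d, e, p] n 1
      = poch (e - c) n / poch e n *
        hypTerm [d - a - 1, c, γ + 1] [d, 1 + c - e - (n : ℂ), γ] n 1 := by
  rcases Nat.eq_zero_or_pos n with hn0 | hn
  · subst hn0; simp [hypTerm, poch_zero]
  · have hd : ∀ k ≤ n, poch d k ≠ 0 := hnd d (by simp)
    have he : ∀ k ≤ n, poch e k ≠ 0 := hnd e (by simp)
    have hp : ∀ k ≤ n, poch p k ≠ 0 := hnd p (by simp)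
    have hfh : ∀ k ≤ n, poch (1 + c - e - (n:ℂ)) k ≠ 0 := hnd _ (by simp)
    have hγk : ∀ k ≤ n, poch γ k ≠ 0 := hnd γ (by simp)
    have hp0 : p ≠ 0 := by have := hp 1 hn; rwa [poch_one] at this
    have hγ0 : γ ≠ 0 := by have := hγk 1 hn; rwa [poch_one] at this
    have hen : poch e n ≠ 0 := he n le_rfl
    rw [contig n a c d e p hp0 hp, contig n (d-a-1) c d (1+c-e-(n:ℂ)) γ hγ0 hγk,
      sears n a c d e hd he hfh, sears n (a+1) c d e hd he hfh,
      show d - (a+1) = d - a - 1 by ring, show d - a - 1 + 1 = d - a by ring]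
    have hγ' : γ * (p - a) = p * (d - a - 1) := by
      rw [hγ]; field_simp
    set A := ∑ j ∈ Finset.range (n+1),
        poch (d - a) j * poch c j * poch (-(n:ℂ)) j /
          ((j.factorial:ℂ) * (poch d j * poch (1 + c - e - (n:ℂ)) j)) with hA
    set B := ∑ j ∈ Finset.range (n+1),
        poch (d - a - 1) j * poch c j * poch (-(n:ℂ)) j /
          ((j.factorial:ℂ) * (poch d j * poch (1 + c - e - (n:ℂ)) j)) with hB
    field_simp
    linear_combination (poch (e-c) n * (A - B)) * hγ'
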